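/- Let ω ∈ ℱ¹(ℙⁿ,e) and a ≥ 1. Under the ℂ-linear isomorphism V_a/W_a ≅ I(ω)_a induced by (h,η) ↦ h, the image of the subspace C_a := { (i_Xω, (1/e)(a·i_X dω + e·d(i_Xω))) : X = Σᵢ Xᵢ ∂/∂xᵢ with all Xᵢ ∈ S homogeneous of degree a−e+1 } (taken modulo W_a) is exactly the degree-a homogeneous component J(ω)_a of the singular ideal. Consequently there is an induced ℂ-linear isomorphism (V_a/W_a)/(image of C_a) ≅ (I(ω)/J(ω))_a, i.e., the isomorphism classes of graded projective unfoldings of degree a are computed by I(ω)/J(ω) in degree a. -/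

import Mathlib

open MvPolynomial

noncomputable section

abbrev PolyS (n : ℕ) := MvPolynomial (Fin (n+1)) ℂ

/-- The coefficient of `dω` at `dx_i ∧ dx_j`, where `ω` is the 1-form `Σ ω i dx_i`. -/
def dcoeff {n : ℕ} (ω : Fin (n+1) → PolyS n) (i j : Fin (n+1)) : PolyS n :=
  pderiv i (ω j) - pderiv j (ω i)

/-- Integrability `ω ∧ dω = 0`, written in coordinates. -/
def Integrable {n : ℕ} (ω : Fin (n+1) → PolyS n) : Prop :=
  ∀ i j k, ω i * dcoeff ω j k - ω j * dcoeff ω i k + ω k * dcoeff ω i j = 0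

/-- The singular ideal `J(ω)`, generated by the coefficients of `ω`. -/
def Jideal {n : ℕ} (ω : Fin (n+1) → PolyS n) : Ideal (PolyS n) :=
  Ideal.span (Set.range ω)

/-- The ideal `𝒞(dω)` of coefficients of `dω`. -/
def Cdiff {n : ℕ} (ω : Fin (n+1) → PolyS n) : Ideal (PolyS n) :=
  Ideal.span {g | ∃ i j, g = dcoeff ω i j}

/-- The unfoldings ideal `I(ω) = {h : h·dω = ω ∧ η for some 1-form η}`. -/
def Iideal {n : ℕ} (ω : Fin (n+1) → PolyS n) : Ideal (PolyS n) where
  carrier := {h | ∃ η : Fin (n+1) → PolyS n,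
    ∀ i j, h * dcoeff ω i j = ω i * η j - ω j * η i}
  add_mem' := by
    rintro a b ⟨η, hη⟩ ⟨ξ, hξ⟩
    exact ⟨η + ξ, fun i j => by
      simp only [Pi.add_apply]
      linear_combination hη i j + hξ i j⟩
  zero_mem' := ⟨0, fun i j => by simp⟩
  smul_mem' := by
    rintro c a ⟨η, hη⟩
    exact ⟨c • η, fun i j => by
      simp only [smul_eq_mul, Pi.smul_apply]
      linear_combination c * hη i j⟩

/-- The Kupka ideal `K(ω) = (J(ω) : 𝒞(dω))`. -/
def Kideal {n : ℕ} (ω : Fin (n+1) → PolyS n) : Ideal (PolyS n) :=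
  (Jideal ω).colon (Cdiff ω)

/-- The non-Kupka ideal `L(ω) = (J(ω) : K(ω)^∞)`. -/
def Lideal {n : ℕ} (ω : Fin (n+1) → PolyS n) : Ideal (PolyS n) :=
  ⨆ d : ℕ, (Jideal ω).colon (((Kideal ω) ^ (d+1) : Ideal (PolyS n)) : Set (PolyS n))

/-- The irrelevant ideal `(x_0, …, x_n)`. -/
def irrelevant (n : ℕ) : Ideal (PolyS n) := Ideal.span (Set.range X)

/-- `height I ≥ k` : every prime containing `I` has height at least `k`. -/
def heightGE {n : ℕ} (I : Ideal (PolyS n)) (k : ℕ) : Prop :=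
  ∀ p : PrimeSpectrum (PolyS n), I ≤ p.asIdeal → (k : ℕ∞) ≤ Order.height p

/-- `ω ∈ ℱ¹(ℙⁿ, e)` : a foliation one-form of degree `e` on `ℙⁿ`. -/
def IsFoliation (n e : ℕ) (ω : Fin (n+1) → PolyS n) : Prop :=
  ω ≠ 0 ∧ 2 ≤ e ∧ (∀ i, (ω i).IsHomogeneous (e-1)) ∧ Integrable ω ∧
  (∑ i, X i * ω i = 0) ∧ heightGE (Jideal ω) 2

/-- A homogeneous ideal: stable under taking homogeneous components. -/
def IsHomogIdeal {n : ℕ} (p : Ideal (PolyS n)) : Prop :=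
  ∀ h ∈ p, ∀ d : ℕ, homogeneousComponent d h ∈ p

/-- A relevant prime: a homogeneous prime different from the irrelevant ideal. -/
def IsRelevantPrime {n : ℕ} (p : Ideal (PolyS n)) : Prop :=
  p.IsPrime ∧ IsHomogIdeal p ∧ p ≠ irrelevant n

/-- A relevant prime `p` is a division point of `ω` iff `I(ω) ⊄ p`. -/
def DivisionPoint {n : ℕ} (ω : Fin (n+1) → PolyS n) (p : Ideal (PolyS n)) : Prop :=
  ¬ (Iideal ω ≤ p)

/-- The class `𝒰`. -/
def InU {n : ℕ} (ω : Fin (n+1) → PolyS n) : Prop :=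
  ∀ p : Ideal (PolyS n), IsRelevantPrime p → ¬ (Kideal ω ≤ p) → DivisionPoint ω p

/-- The space `V_a` of graded unfolding data of degree `a`:
pairs `(h, η)` with `h` homogeneous of degree `a`, the coefficients of `η` homogeneous
of degree `a-1`, and `a·h·dω = e·ω ∧ (η − dh)`. -/
def Vsub {n : ℕ} (ω : Fin (n+1) → PolyS n) (e a : ℕ) :
    Submodule ℂ (PolyS n × (Fin (n+1) → PolyS n)) where
  carrier := {p | p.1.IsHomogeneous a ∧ (∀ i, (p.2 i).IsHomogeneous (a-1)) ∧
    ∀ i j, (a : PolyS n) * p.1 * dcoeff ω i j =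
      (e : PolyS n) * (ω i * (p.2 j - pderiv j p.1) - ω j * (p.2 i - pderiv i p.1))}
  add_mem' := by
    rintro ⟨h₁, η₁⟩ ⟨h₂, η₂⟩ ⟨hh₁, hη₁, heq₁⟩ ⟨hh₂, hη₂, heq₂⟩
    refine ⟨hh₁.add hh₂, fun i => (hη₁ i).add (hη₂ i), fun i j => ?_⟩
    simp only [Prod.fst_add, Prod.snd_add, Pi.add_apply, map_add]
    linear_combination heq₁ i j + heq₂ i j
  zero_mem' := by
    refine ⟨isHomogeneous_zero _ _ _, fun i => isHomogeneous_zero _ _ _, fun i j => by simp⟩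
  smul_mem' := by
    rintro c ⟨h, η⟩ ⟨hh, hη, heq⟩
    refine ⟨?_, fun i => ?_, fun i j => ?_⟩
    · exact (mem_homogeneousSubmodule _ _).1
        ((homogeneousSubmodule (Fin (n+1)) ℂ a).smul_mem c
          ((mem_homogeneousSubmodule _ _).2 hh))
    · exact (mem_homogeneousSubmodule _ _).1
        ((homogeneousSubmodule (Fin (n+1)) ℂ (a-1)).smul_mem c
          ((mem_homogeneousSubmodule _ _).2 (hη i)))
    · simp only [Prod.smul_fst, Prod.smul_snd, Pi.smul_apply, map_smul]
      simp only [MvPolynomial.smul_eq_C_mul, pderiv_C_mul]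
      linear_combination (C c : PolyS n) * heq i j

/-- The subspace `W_a = {(0, f·ω) : f homogeneous of degree a-e}` (with `f = 0` forced
when `a < e`, since then there is no nonzero homogeneous polynomial of degree `a-e`). -/
def Wsub {n : ℕ} (ω : Fin (n+1) → PolyS n) (e a : ℕ) :
    Submodule ℂ (PolyS n × (Fin (n+1) → PolyS n)) where
  carrier := {p | ∃ f : PolyS n, p = (0, f • ω) ∧
    ((e ≤ a ∧ f.IsHomogeneous (a - e)) ∨ f = 0)}
  add_mem' := by
    rintro p q ⟨f, rfl, hf⟩ ⟨g, rfl, hg⟩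
    refine ⟨f + g, by rw [Prod.mk_add_mk, add_zero, add_smul], ?_⟩
    rcases hf with ⟨hea, hf⟩ | rfl
    · rcases hg with ⟨-, hg⟩ | rfl
      · exact Or.inl ⟨hea, hf.add hg⟩
      · simpa using Or.inl ⟨hea, hf⟩
    · simpa using hg
  zero_mem' := ⟨0, by rw [zero_smul]; rfl, Or.inr rfl⟩
  smul_mem' := by
    rintro c p ⟨f, rfl, hf⟩
    refine ⟨c • f, by rw [Prod.smul_mk, smul_zero, smul_assoc], ?_⟩
    rcases hf with ⟨hea, hf⟩ | rfl
    · exact Or.inl ⟨hea, (mem_homogeneousSubmodule _ _).1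
        ((homogeneousSubmodule (Fin (n+1)) ℂ (a-e)).smul_mem c
          ((mem_homogeneousSubmodule _ _).2 hf))⟩
    · exact Or.inr (by simp)


/-- The degree-`d` homogeneous component of an ideal `A ⊆ S`, as a `ℂ`-subspace of `S`. -/
def homogComp {n : ℕ} (A : Ideal (PolyS n)) (d : ℕ) : Submodule ℂ (PolyS n) :=
  (Submodule.restrictScalars ℂ A) ⊓ (homogeneousSubmodule (Fin (n+1)) ℂ d)

/-- The subspace `C_a` of trivial unfolding data of degree `a`, coming from vector fields:
pairs `(i_X ω, (1/e)(a·i_X dω + e·d(i_X ω)))` with `X` a homogeneous vector field of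
degree `a - e + 1`. -/
def Csub {n : ℕ} (ω : Fin (n+1) → PolyS n) (e a : ℕ) :
    Submodule ℂ (PolyS n × (Fin (n+1) → PolyS n)) where
  carrier := {p | ∃ Xv : Fin (n+1) → PolyS n,
    ((e ≤ a + 1 ∧ ∀ i, (Xv i).IsHomogeneous (a + 1 - e)) ∨ Xv = 0) ∧
    p = (∑ i, Xv i * ω i,
      fun j => (e : ℂ)⁻¹ • ((a : PolyS n) * (∑ i, Xv i * dcoeff ω i j) +
        (e : PolyS n) * pderiv j (∑ i, Xv i * ω i)))}
  add_mem' := by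
    rintro p q ⟨Xv, hX, rfl⟩ ⟨Yv, hY, rfl⟩
    have hsum : ∀ (Z W g : Fin (n+1) → PolyS n),
        ∑ i, (Z i + W i) * g i = (∑ i, Z i * g i) + ∑ i, W i * g i := by
      intro Z W g
      rw [← Finset.sum_add_distrib]
      exact Finset.sum_congr rfl fun i _ => add_mul _ _ _
    refine ⟨Xv + Yv, ?_, ?_⟩
    · rcases hX with ⟨hea, hX⟩ | rfl
      · rcases hY with ⟨-, hY⟩ | rfl
        · exact Or.inl ⟨hea, fun i => (hX i).add (hY i)⟩
        · exact Or.inl ⟨hea, by simpa using hX⟩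
      · simpa using hY
    · refine Prod.ext ?_ ?_
      · simp only [Prod.fst_add, Pi.add_apply]
        exact (hsum Xv Yv ω).symm
      · funext j
        simp only [Prod.snd_add, Pi.add_apply]
        rw [hsum Xv Yv (fun i => dcoeff ω i j), hsum Xv Yv ω, map_add, ← smul_add]
        congr 1
        ring
  zero_mem' := by
    refine ⟨0, Or.inr rfl, ?_⟩
    refine Prod.ext (by simp) ?_
    funext j
    simp
  smul_mem' := by
    rintro c p ⟨Xv, hX, rfl⟩
    refine ⟨c • Xv, ?_, ?_⟩
    · rcases hX with ⟨hea, hX⟩ | rfl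
      · refine Or.inl ⟨hea, fun i => ?_⟩
        exact (mem_homogeneousSubmodule _ _).1
          ((homogeneousSubmodule (Fin (n+1)) ℂ (a+1-e)).smul_mem c
            ((mem_homogeneousSubmodule _ _).2 (hX i)))
      · exact Or.inr (smul_zero c)
    · have hS : ∀ g : Fin (n+1) → PolyS n,
          ∑ i, (c • Xv i) * g i = c • ∑ i, Xv i * g i := by
        intro g
        rw [Finset.smul_sum]
        exact Finset.sum_congr rfl fun i _ => smul_mul_assoc c (Xv i) (g i)
      refine Prod.ext ?_ ?_
      · simp only [Prod.smul_fst]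
        exact (hS ω).symm
      · funext j
        simp only [Prod.smul_snd, Pi.smul_apply]
        rw [hS (fun i => dcoeff ω i j), hS ω]
        have hd : (pderiv j) (c • ∑ i, Xv i * ω i) =
            c • (pderiv j) (∑ i, Xv i * ω i) := by
          rw [MvPolynomial.smul_eq_C_mul, pderiv_C_mul, ← MvPolynomial.smul_eq_C_mul]
        rw [hd, mul_smul_comm, mul_smul_comm, ← smul_add, smul_comm]


section AuxLemmas


lemma pderiv_isHomog {n m : ℕ} {p : PolyS n} (hp : p.IsHomogeneous m) (i : Fin (n+1)) :
    (pderiv i p).IsHomogeneous (m - 1) := by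
  rw [p.as_sum, map_sum]
  apply MvPolynomial.IsHomogeneous.sum
  intro d hd
  rw [pderiv_monomial]
  by_cases h0 : d i = 0
  · rw [h0]; simpa using isHomogeneous_zero _ _ _
  · apply isHomogeneous_monomial
    have hdm : Finsupp.weight 1 d = m := hp (mem_support_iff.1 hd)
    have hrec : (d - Finsupp.single i 1) + Finsupp.single i 1 = d := by
      ext j
      rcases eq_or_ne i j with rfl | hij
      · simp only [Finsupp.add_apply, Finsupp.tsub_apply, Finsupp.single_eq_same]
        omega
      · simp [Finsupp.single_apply, hij]
    have h1 := congrArg (Finsupp.weight (1 : Fin (n+1) → ℕ)) hrec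
    rw [map_add] at h1
    have h2 : Finsupp.weight (1 : Fin (n+1) → ℕ) (Finsupp.single i 1) = 1 := by
      simp [Finsupp.weight_apply, Finsupp.sum_single_index]
    rw [Finsupp.degree_eq_weight_one]
    simp only [Pi.one_def] at h1 h2 hdm ⊢
    omega

lemma hcomp_mul {n : ℕ} {g φ : PolyS n} {m d : ℕ} (hφ : φ.IsHomogeneous m) :
    homogeneousComponent d (g * φ) =
      if m ≤ d then homogeneousComponent (d - m) g * φ else 0 := by
  conv_lhs => rw [← g.sum_homogeneousComponent, Finset.sum_mul, map_sum]
  have hterm : ∀ k, homogeneousComponent d (homogeneousComponent k g * φ) =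
      if d = k + m then homogeneousComponent k g * φ else 0 := by
    intro k
    exact homogeneousComponent_of_mem
      ((mem_homogeneousSubmodule _ _).2 ((homogeneousComponent_isHomogeneous k g).mul hφ))
  simp_rw [hterm]
  by_cases hmd : m ≤ d
  · rw [if_pos hmd]
    have hcond : ∀ k, (d = k + m) = (k = d - m) := by intro k; simp only [eq_iff_iff]; omega
    simp_rw [hcond]
    rw [Finset.sum_ite_eq' (Finset.range (g.totalDegree + 1)) (d - m)
      (fun k => homogeneousComponent k g * φ)]
    by_cases hin : d - m ∈ Finset.range (g.totalDegree + 1)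
    · rw [if_pos hin]
    · rw [if_neg hin, homogeneousComponent_eq_zero, zero_mul]
      simp at hin
      omega
  · rw [if_neg hmd]
    apply Finset.sum_eq_zero
    intro k _
    rw [if_neg (by omega)]

lemma einv {n e : ℕ} (he : (e : ℂ) ≠ 0) (P : PolyS n) :
    (e : PolyS n) * ((e : ℂ)⁻¹ • P) = P := by
  have h1 : (e : PolyS n) = C (e : ℂ) := by simp
  rw [h1, mul_smul_comm, ← smul_eq_C_mul, smul_smul, inv_mul_cancel₀ he, one_smul]

end AuxLemmas

set_option maxHeartbeats 1000000 in
/-- Let `ω ∈ ℱ¹(ℙⁿ,e)` and `a ≥ 1`. Under any isomorphism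
`f : V_a/W_a ≅ I(ω)_a` induced by `(h,η) ↦ h`, the image of `C_a` (mod `W_a`) is exactly
`J(ω)_a`; consequently there is an induced `ℂ`-linear isomorphism
`(V_a/W_a)/C_a ≅ (I(ω)/J(ω))_a`. -/
theorem stmt9 (n e a : ℕ) (ω : Fin (n+1) → PolyS n) (hfol : IsFoliation n e ω)
    (ha : 1 ≤ a)
    (f : (↥(Vsub ω e a) ⧸ (Wsub ω e a).comap (Vsub ω e a).subtype) ≃ₗ[ℂ]
      ↥(homogComp (Iideal ω) a))
    (hf : ∀ v : ↥(Vsub ω e a),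
      (f (Submodule.Quotient.mk v) : PolyS n) = (v : PolyS n × (Fin (n+1) → PolyS n)).1) :
    Submodule.map ((homogComp (Iideal ω) a).subtype ∘ₗ (f.toLinearMap ∘ₗ
        Submodule.mkQ ((Wsub ω e a).comap (Vsub ω e a).subtype)))
      ((Csub ω e a).comap (Vsub ω e a).subtype) = homogComp (Jideal ω) a ∧
    ∃ g : ((↥(Vsub ω e a) ⧸ (Wsub ω e a).comap (Vsub ω e a).subtype) ⧸
        (Submodule.map (Submodule.mkQ ((Wsub ω e a).comap (Vsub ω e a).subtype))
          ((Csub ω e a).comap (Vsub ω e a).subtype))) ≃ₗ[ℂ]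
        (↥(homogComp (Iideal ω) a) ⧸
          (homogComp (Jideal ω) a).comap (homogComp (Iideal ω) a).subtype),
      ∀ v : ↥(Vsub ω e a),
        g (Submodule.Quotient.mk (Submodule.Quotient.mk v)) =
          Submodule.Quotient.mk (f (Submodule.Quotient.mk v)) := by
  obtain ⟨hω0, he2, hωh, hint, heuler, hht⟩ := hfol
  have heC : (e : ℂ) ≠ 0 := Nat.cast_ne_zero.2 (by omega)
  have key : ∀ (c : Fin (n+1) → PolyS n) (i j : Fin (n+1)),
      (∑ k, c k * ω k) * dcoeff ω i j =
        ω i * (∑ k, c k * dcoeff ω k j) - ω j * (∑ k, c k * dcoeff ω k i) := by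
    intro c i j
    rw [Finset.sum_mul, Finset.mul_sum, Finset.mul_sum, ← Finset.sum_sub_distrib]
    exact Finset.sum_congr rfl fun k _ => by linear_combination (c k) * hint k i j
  set L := (homogComp (Iideal ω) a).subtype ∘ₗ (f.toLinearMap ∘ₗ
      Submodule.mkQ ((Wsub ω e a).comap (Vsub ω e a).subtype)) with hLdef
  have hL : ∀ v : ↥(Vsub ω e a), L v = (v : PolyS n × (Fin (n+1) → PolyS n)).1 := by
    intro v
    simp only [hLdef, LinearMap.coe_comp, Function.comp_apply, Submodule.coe_subtype,
      Submodule.mkQ_apply]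
    exact hf v
  have hmain : Submodule.map L ((Csub ω e a).comap (Vsub ω e a).subtype)
      = homogComp (Jideal ω) a := by
    apply le_antisymm
    · rintro x ⟨v, hv, rfl⟩
      obtain ⟨Xv, hXv, hveq⟩ := hv
      have h1 : (v : PolyS n × (Fin (n+1) → PolyS n)).1 = ∑ i, Xv i * ω i :=
        congrArg Prod.fst hveq
      rw [hL v]
      refine Submodule.mem_inf.2 ⟨?_, (mem_homogeneousSubmodule _ _).2 v.2.1⟩
      rw [Submodule.restrictScalars_mem, h1]
      exact Ideal.sum_mem _ fun i _ => Ideal.mul_mem_left _ _ (Ideal.subset_span ⟨i, rfl⟩)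
    · intro x hx
      obtain ⟨hxJ, hxh'⟩ := Submodule.mem_inf.1 hx
      have hxh : x.IsHomogeneous a := (mem_homogeneousSubmodule _ _).1 hxh'
      rw [Submodule.restrictScalars_mem] at hxJ
      obtain ⟨c, hc⟩ := (Submodule.mem_span_range_iff_exists_fun _).1 hxJ
      have hc' : ∑ i, c i * ω i = x := by simpa [smul_eq_mul] using hc
      have h1 : homogeneousComponent a x = x := by
        rw [homogeneousComponent_of_mem ((mem_homogeneousSubmodule _ _).2 hxh), if_pos rfl]
      by_cases hea : e ≤ a + 1
      · set Xv : Fin (n+1) → PolyS n := fun i => homogeneousComponent (a+1-e) (c i)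
          with hXvdef
        have hXh : ∀ i, (Xv i).IsHomogeneous (a+1-e) := fun i =>
          homogeneousComponent_isHomogeneous _ _
        have hsum : ∑ i, Xv i * ω i = x := by
          calc ∑ i, Xv i * ω i = ∑ i, homogeneousComponent a (c i * ω i) := by
                refine Finset.sum_congr rfl fun i _ => ?_
                rw [hcomp_mul (hωh i), if_pos (show e - 1 ≤ a by omega),
                  show a - (e-1) = a + 1 - e by omega]
            _ = homogeneousComponent a (∑ i, c i * ω i) := (map_sum _ _ _).symm
            _ = x := by rw [hc', h1]
        have hdch : ∀ k j, (dcoeff ω k j).IsHomogeneous (e-2) := by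
          intro k j
          have h2 := (pderiv_isHomog (hωh j) k).sub (pderiv_isHomog (hωh k) j)
          exact (show e - 1 - 1 = e - 2 by omega) ▸ h2
        have hSj : ∀ j, (∑ i, Xv i * dcoeff ω i j).IsHomogeneous (a-1) := by
          intro j
          apply MvPolynomial.IsHomogeneous.sum
          intro k _
          exact (show (a+1-e)+(e-2) = a-1 by omega) ▸ ((hXh k).mul (hdch k j))
        have hca : (a : PolyS n) = C (a : ℂ) := by simp
        have hce : (e : PolyS n) = C (e : ℂ) := by simp
        have hQ : ∀ j, ((a : PolyS n) * (∑ i, Xv i * dcoeff ω i j) +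
            (e : PolyS n) * pderiv j (∑ i, Xv i * ω i)).IsHomogeneous (a-1) := by
          intro j
          apply MvPolynomial.IsHomogeneous.add
          · rw [hca]
            simpa using (isHomogeneous_C (Fin (n+1)) ((a : ℂ))).mul (hSj j)
          · have hdx : (pderiv j (∑ i, Xv i * ω i)).IsHomogeneous (a-1) := by
              rw [hsum]; exact pderiv_isHomog hxh j
            rw [hce]
            simpa using (isHomogeneous_C (Fin (n+1)) ((e : ℂ))).mul hdx
        refine ⟨⟨(∑ i, Xv i * ω i,
          fun j => (e : ℂ)⁻¹ • ((a : PolyS n) * (∑ i, Xv i * dcoeff ω i j) +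
            (e : PolyS n) * pderiv j (∑ i, Xv i * ω i))), ?_⟩,
          ⟨Xv, Or.inl ⟨hea, hXh⟩, rfl⟩, ?_⟩
        · refine ⟨by rw [hsum]; exact hxh, fun j => ?_, fun i j => ?_⟩
          · exact (mem_homogeneousSubmodule _ _).1
              ((homogeneousSubmodule (Fin (n+1)) ℂ (a-1)).smul_mem _
                ((mem_homogeneousSubmodule _ _).2 (hQ j)))
          · have hk := key Xv i j
            have hrel : (e : PolyS n) * C ((e : ℂ)⁻¹) = 1 := by
              rw [hce, ← map_mul, mul_inv_cancel₀ heC, map_one]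
            show (a : PolyS n) * (∑ k, Xv k * ω k) * dcoeff ω i j = _
            simp only [MvPolynomial.smul_eq_C_mul]
            linear_combination (a : PolyS n) * hk -
              (ω i * ((a : PolyS n) * (∑ k, Xv k * dcoeff ω k j) +
                (e : PolyS n) * pderiv j (∑ k, Xv k * ω k))) * hrel +
              (ω j * ((a : PolyS n) * (∑ k, Xv k * dcoeff ω k i) +
                (e : PolyS n) * pderiv i (∑ k, Xv k * ω k))) * hrel
        · rw [hL]
          exact hsum
      · have hx0 : x = 0 := by
          rw [← h1, ← hc', map_sum]
          apply Finset.sum_eq_zero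
          intro k _
          rw [hcomp_mul (hωh k), if_neg (by omega)]
        exact ⟨0, Submodule.zero_mem _, by rw [map_zero, hx0]⟩
  refine ⟨hmain, ?_⟩
  have hmaps : Submodule.map L ((Csub ω e a).comap (Vsub ω e a).subtype) =
      Submodule.map (homogComp (Iideal ω) a).subtype
        (Submodule.map f.toLinearMap
          (Submodule.map (Submodule.mkQ ((Wsub ω e a).comap (Vsub ω e a).subtype))
            ((Csub ω e a).comap (Vsub ω e a).subtype))) := by
    rw [hLdef, Submodule.map_comp, Submodule.map_comp]
  have hmap2 : Submodule.map f.toLinearMap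
      (Submodule.map (Submodule.mkQ ((Wsub ω e a).comap (Vsub ω e a).subtype))
        ((Csub ω e a).comap (Vsub ω e a).subtype)) =
      (homogComp (Jideal ω) a).comap (homogComp (Iideal ω) a).subtype := by
    have h2 := hmain
    rw [hmaps] at h2
    rw [← h2, Submodule.comap_map_eq_of_injective (Submodule.injective_subtype _)]
  refine ⟨Submodule.Quotient.equiv _ _ f hmap2, fun v => ?_⟩
  rfl


end
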